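/- With the same RIFS setup, the typical lower box dimension of the random attractor is infimal: the set $\{\omega \in \Omega : \underline{\dim}_B F_\omega = \inf_{u \in \Omega} \underline{\dim}_B F_u\}$ is residual in $(\Omega, d_\Omega)$. -/

import Mathlib

open Metric MeasureTheory Filter Set
open scoped ENNReal NNReal

/-- `N_δ(F)`: the smallest number of open sets of diameter at most `δ` needed to cover `F`. -/
noncomputable def coverNum {K : Type*} [MetricSpace K] (F : Set K) (δ : ℝ) : ℝ≥0∞ :=
  ⨅ (t : Finset (Set K)) (_ : ∀ U ∈ t, IsOpen U ∧ Metric.diam U ≤ δ) (_ : F ⊆ ⋃ U ∈ t, U),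
    (t.card : ℝ≥0∞)

section Cover
variable {K : Type*} [MetricSpace K] [CompactSpace K]

lemma coverNum_le_card {F : Set K} {δ : ℝ} {t : Finset (Set K)}
    (h1 : ∀ U ∈ t, IsOpen U ∧ diam U ≤ δ) (h2 : F ⊆ ⋃ U ∈ t, U) :
    coverNum F δ ≤ t.card :=
  iInf_le_of_le t (iInf_le_of_le h1 (iInf_le_of_le h2 le_rfl))

lemma le_coverNum {F : Set K} {δ : ℝ} {x : ℝ≥0∞}
    (h : ∀ t : Finset (Set K), (∀ U ∈ t, IsOpen U ∧ diam U ≤ δ) → F ⊆ ⋃ U ∈ t, U →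
      x ≤ t.card) :
    x ≤ coverNum F δ :=
  le_iInf fun t => le_iInf fun h1 => le_iInf fun h2 => h t h1 h2

lemma coverNum_mono {F G : Set K} (h : F ⊆ G) (δ : ℝ) : coverNum F δ ≤ coverNum G δ :=
  le_coverNum fun _ h1 h2 => coverNum_le_card h1 (h.trans h2)

lemma one_le_coverNum {F : Set K} (hF : F.Nonempty) (δ : ℝ) : 1 ≤ coverNum F δ := by
  refine le_coverNum fun t _ h2 => ?_
  obtain ⟨x, hx⟩ := hF
  obtain ⟨U, hU, -⟩ := mem_iUnion₂.mp (h2 hx)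
  exact_mod_cast Nat.one_le_cast.mpr (Finset.card_pos.mpr ⟨U, hU⟩)

lemma coverNum_lt_top {F : Set K} (hF : IsCompact F) {δ : ℝ} (hδ : 0 < δ) :
    coverNum F δ < ⊤ := by
  classical
  obtain ⟨s, hs⟩ := hF.elim_finite_subcover (fun x : K => ball x (δ / 3))
    (fun _ => isOpen_ball) (fun x _ => mem_iUnion.mpr ⟨x, mem_ball_self (by linarith)⟩)
  refine lt_of_le_of_lt (coverNum_le_card (t := s.image fun x => ball x (δ / 3)) ?_ ?_)
    (ENNReal.natCast_lt_top _)
  · intro U hU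
    obtain ⟨x, -, rfl⟩ := Finset.mem_image.mp hU
    exact ⟨isOpen_ball, (diam_ball (by linarith)).trans (by linarith)⟩
  · intro x hx
    obtain ⟨y, hy⟩ := mem_iUnion.mp (hs hx)
    obtain ⟨hys, hxy⟩ := mem_iUnion.mp hy
    exact mem_iUnion₂.mpr ⟨ball y (δ / 3), Finset.mem_image.mpr ⟨y, hys, rfl⟩, hxy⟩

lemma exists_cover {F : Set K} {δ : ℝ} (hne : coverNum F δ ≠ ⊤) :
    ∃ t : Finset (Set K), (∀ U ∈ t, IsOpen U ∧ diam U ≤ δ) ∧ (F ⊆ ⋃ U ∈ t, U) ∧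
      (t.card : ℝ≥0∞) = coverNum F δ := by
  classical
  have hex : ∃ t : Finset (Set K), (∀ U ∈ t, IsOpen U ∧ diam U ≤ δ) ∧ F ⊆ ⋃ U ∈ t, U := by
    by_contra hc
    exact hne (top_le_iff.mp (le_coverNum fun t h1 h2 => absurd ⟨t, h1, h2⟩ hc))
  set P : ℕ → Prop := fun n => ∃ t : Finset (Set K),
    ((∀ U ∈ t, IsOpen U ∧ diam U ≤ δ) ∧ F ⊆ ⋃ U ∈ t, U) ∧ t.card = n with hP
  have hPne : ∃ n, P n := ⟨hex.choose.card, hex.choose, hex.choose_spec, rfl⟩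
  obtain ⟨t, ⟨h1, h2⟩, hcard⟩ := Nat.sInf_mem hPne
  refine ⟨t, h1, h2, le_antisymm ?_ (coverNum_le_card h1 h2)⟩
  refine le_coverNum fun t' h1' h2' => ?_
  rw [hcard]
  have hmem : P t'.card := ⟨t', ⟨h1', h2'⟩, rfl⟩
  exact_mod_cast Nat.sInf_le hmem

lemma coverNum_image [Nonempty K] {φ : K → K} (hφ : ∀ x y, dist (φ x) (φ y) ≤ dist x y)
    {A : Set K} {δ : ℝ} (hδ : 0 < δ) :
    coverNum (φ '' A) (3 * δ) ≤ coverNum A δ := by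
  classical
  by_cases hne : coverNum A δ = ⊤
  · exact hne ▸ le_top
  obtain ⟨t, h1, h2, hcard⟩ := exists_cover hne
  set pick : Set K → K := fun U => if h : (U ∩ A).Nonempty then h.choose else Classical.arbitrary K
    with hpick
  refine le_trans (coverNum_le_card (t := t.image fun U => ball (φ (pick U)) (3 * δ / 2)) ?_ ?_)
    ?_
  · intro U hU
    obtain ⟨V, -, rfl⟩ := Finset.mem_image.mp hU
    exact ⟨isOpen_ball, (diam_ball (by linarith)).trans (by linarith)⟩
  · rintro a ⟨y, hyA, rfl⟩
    obtain ⟨U, hUt, hyU⟩ := mem_iUnion₂.mp (h2 hyA)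
    have hUA : (U ∩ A).Nonempty := ⟨y, hyU, hyA⟩
    have hpU : pick U ∈ U ∩ A := by rw [hpick]; simp only [hUA, dif_pos]; exact hUA.choose_spec
    have hdy : dist y (pick U) ≤ δ := by
      refine le_trans (dist_le_diam_of_mem ?_ hyU hpU.1) (h1 U hUt).2
      exact (isCompact_univ.isBounded).subset (subset_univ _)
    refine mem_iUnion₂.mpr ⟨_, Finset.mem_image.mpr ⟨U, hUt, rfl⟩, ?_⟩
    exact mem_ball.mpr (lt_of_le_of_lt (hφ y (pick U)) (by linarith))
  · rw [← hcard]
    exact_mod_cast Finset.card_image_le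

lemma coverNum_iUnion {n : ℕ} (A : Fin n → Set K) (δ : ℝ) :
    coverNum (⋃ j, A j) δ ≤ ∑ j, coverNum (A j) δ := by
  classical
  by_cases h : ∀ j, coverNum (A j) δ ≠ ⊤
  · choose t h1 h2 hcard using fun j => exists_cover (h j)
    refine le_trans (coverNum_le_card (t := Finset.univ.biUnion t) ?_ ?_) ?_
    · intro U hU
      obtain ⟨j, -, hUj⟩ := Finset.mem_biUnion.mp hU
      exact h1 j U hUj
    · intro x hx
      obtain ⟨j, hxj⟩ := mem_iUnion.mp hx
      obtain ⟨U, hUt, hxU⟩ := mem_iUnion₂.mp (h2 j hxj)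
      exact mem_iUnion₂.mpr ⟨U, Finset.mem_biUnion.mpr ⟨j, Finset.mem_univ _, hUt⟩, hxU⟩
    · have hc : ((Finset.univ.biUnion t).card : ℝ≥0∞) ≤ ((∑ j, (t j).card : ℕ) : ℝ≥0∞) := by
        exact_mod_cast Finset.card_biUnion_le
      refine hc.trans (le_of_eq ?_)
      rw [Nat.cast_sum]
      exact Finset.sum_congr rfl fun j _ => hcard j
  · push_neg at h
    obtain ⟨j, hj⟩ := h
    exact le_top.trans_eq (ENNReal.sum_eq_top.mpr ⟨j, Finset.mem_univ j, hj⟩).symm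

end Cover
/-- Lower box(-counting) dimension. -/
noncomputable def lowerBoxDim {K : Type*} [MetricSpace K] (F : Set K) : ℝ≥0∞ :=
  Filter.liminf
    (fun δ : ℝ => ENNReal.ofReal (Real.log (coverNum F δ).toReal / -Real.log δ))
    (nhdsWithin 0 (Set.Ioi 0))

/-- Upper box(-counting) dimension. -/
noncomputable def upperBoxDim {K : Type*} [MetricSpace K] (F : Set K) : ℝ≥0∞ :=
  Filter.limsup
    (fun δ : ℝ => ENNReal.ofReal (Real.log (coverNum F δ).toReal / -Real.log δ))
    (nhdsWithin 0 (Set.Ioi 0))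

/-- The level-`k` approximation of the random attractor: the union over all length-`k`
words `(i₁,…,i_k)` with `i_l ∈ 𝓘_{ω_l}` of `S_{ω₁,i₁} ∘ ⋯ ∘ S_{ω_k,i_k}(K₀)`. -/
def levelSets {X : Type*} {N : ℕ} (m : Fin N → ℕ) (S : ∀ i, Fin (m i) → X → X) (K₀ : Set X) :
    (ℕ → Fin N) → ℕ → Set X
  | _, 0 => K₀
  | ω, k+1 => ⋃ j : Fin (m (ω 0)), S (ω 0) j '' levelSets m S K₀ (fun n => ω (n+1)) k

/-- The random attractor `F_ω = ⋂_k ⋃_{i₁,…,i_k} S_{ω₁,i₁} ∘ ⋯ ∘ S_{ω_k,i_k}(K₀)`. -/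
def attractorOf {X : Type*} {N : ℕ} (m : Fin N → ℕ) (S : ∀ i, Fin (m i) → X → X)
    (K₀ : Set X) (ω : ℕ → Fin N) : Set X :=
  ⋂ k, levelSets m S K₀ ω k

/-- `φ` is a bi-Lipschitz contraction. -/
def IsBiLipContraction {K : Type*} [MetricSpace K] (φ : K → K) : Prop :=
  ∃ c C : ℝ, 0 < c ∧ C < 1 ∧
    ∀ x y, c * dist x y ≤ dist (φ x) (φ y) ∧ dist (φ x) (φ y) ≤ C * dist x y


section Attractor

variable {K : Type*} [MetricSpace K] [CompactSpace K] [Nonempty K]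
  {N : ℕ} {m : Fin N → ℕ} {S : ∀ i, Fin (m i) → K → K}

/-- the shift map -/
def shf (ω : ℕ → Fin N) : ℕ → Fin N := fun n => ω (n + 1)

lemma levelSets_succ (ω : ℕ → Fin N) (k : ℕ) :
    levelSets m S univ ω (k + 1) = ⋃ j, S (ω 0) j '' levelSets m S univ (shf ω) k := rfl

lemma levelSets_anti (ω : ℕ → Fin N) : Antitone (levelSets m S univ ω) := by
  refine antitone_nat_of_succ_le fun k => ?_
  induction k generalizing ω with
  | zero => exact subset_univ _
  | succ k ih =>
      rw [levelSets_succ, levelSets_succ]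
      exact iUnion_mono fun j => image_mono (ih (shf ω))

lemma levelSets_congr {ω ω' : ℕ → Fin N} {k : ℕ} (h : ∀ i < k, ω i = ω' i) :
    levelSets m S univ ω k = levelSets m S univ ω' k := by
  induction k generalizing ω ω' with
  | zero => rfl
  | succ k ih =>
      rw [levelSets_succ, levelSets_succ]
      have h0 : ω 0 = ω' 0 := h 0 (Nat.succ_pos _)
      have hsh : levelSets m S univ (shf ω) k = levelSets m S univ (shf ω') k :=
        ih fun i hi => h (i + 1) (Nat.succ_lt_succ hi)
      rw [hsh]
      rw [h0]

variable (hS : ∀ i j, IsBiLipContraction (S i j))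

section withHS
include hS

lemma S_cont (i : Fin N) (j : Fin (m i)) : Continuous (S i j) := by
  obtain ⟨c, C, hc, hC, hb⟩ := hS i j
  refine (LipschitzWith.of_dist_le_mul (K := Real.toNNReal C) fun x y => ?_).continuous
  refine (hb x y).2.trans (mul_le_mul_of_nonneg_right ?_ dist_nonneg)
  exact Real.le_coe_toNNReal C

lemma S_lip (i : Fin N) (j : Fin (m i)) (x y : K) :
    dist (S i j x) (S i j y) ≤ dist x y := by
  obtain ⟨c, C, hc, hC, hb⟩ := hS i j
  have := (hb x y).2
  nlinarith [dist_nonneg (x := x) (y := y)]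

lemma S_inj (i : Fin N) (j : Fin (m i)) : Function.Injective (S i j) := by
  obtain ⟨c, C, hc, hC, hb⟩ := hS i j
  intro x y hxy
  have h1 := (hb x y).1
  rw [hxy, dist_self] at h1
  have hd : dist x y = 0 := by nlinarith [dist_nonneg (x := x) (y := y)]
  exact dist_eq_zero.mp hd

lemma levelSets_isCompact (ω : ℕ → Fin N) (k : ℕ) : IsCompact (levelSets m S univ ω k) := by
  induction k generalizing ω with
  | zero => exact isCompact_univ
  | succ k ih =>
      rw [levelSets_succ]
      exact isCompact_iUnion fun j => (ih (shf ω)).image (S_cont hS _ _)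

lemma levelSets_nonempty (hm : ∀ i, 0 < m i) (ω : ℕ → Fin N) (k : ℕ) :
    (levelSets m S univ ω k).Nonempty := by
  induction k generalizing ω with
  | zero => exact univ_nonempty
  | succ k ih =>
      rw [levelSets_succ]
      obtain ⟨x, hx⟩ := ih (shf ω)
      refine ⟨S (ω 0) ⟨0, hm _⟩ x, mem_iUnion.mpr ⟨⟨0, hm _⟩, mem_image_of_mem _ hx⟩⟩

lemma attractor_nonempty (hm : ∀ i, 0 < m i) (ω : ℕ → Fin N) :
    (attractorOf m S univ ω).Nonempty :=
  IsCompact.nonempty_iInter_of_sequence_nonempty_isCompact_isClosed _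
    (fun k => levelSets_anti ω (Nat.le_succ k)) (levelSets_nonempty hS hm ω)
    (levelSets_isCompact hS ω 0) (fun k => (levelSets_isCompact hS ω k).isClosed)

lemma attractor_isCompact (ω : ℕ → Fin N) : IsCompact (attractorOf m S univ ω) :=
  (isClosed_iInter fun k => (levelSets_isCompact hS ω k).isClosed).isCompact

lemma map_attractor_subset (ω : ℕ → Fin N) (j : Fin (m (ω 0))) :
    S (ω 0) j '' attractorOf m S univ (shf ω) ⊆ attractorOf m S univ ω := by
  rintro x ⟨y, hy, rfl⟩
  refine mem_iInter.mpr fun k => ?_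
  cases k with
  | zero => exact mem_univ _
  | succ k =>
      rw [levelSets_succ]
      exact mem_iUnion.mpr ⟨j, mem_image_of_mem _ (mem_iInter.mp hy k)⟩

lemma attractor_subset_union (ω : ℕ → Fin N) :
    attractorOf m S univ ω ⊆ ⋃ j, S (ω 0) j '' attractorOf m S univ (shf ω) := by
  intro x hx
  have hxk : ∀ k, x ∈ ⋃ j, S (ω 0) j '' levelSets m S univ (shf ω) k := by
    intro k
    have := mem_iInter.mp hx (k + 1)
    rwa [levelSets_succ] at this
  have hj : ∃ j, ∀ k, x ∈ S (ω 0) j '' levelSets m S univ (shf ω) k := by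
    by_contra hc
    push_neg at hc
    choose kf hkf using hc
    obtain ⟨j, hjx⟩ := mem_iUnion.mp (hxk (Finset.univ.sup kf))
    refine hkf j ?_
    refine image_mono (levelSets_anti (shf ω) ?_) hjx
    exact Finset.le_sup (Finset.mem_univ j)
  obtain ⟨j, hj⟩ := hj
  obtain ⟨y, hy0, hxy⟩ := hj 0
  refine mem_iUnion.mpr ⟨j, y, mem_iInter.mpr fun k => ?_, hxy⟩
  obtain ⟨z, hz, hxz⟩ := hj k
  have : z = y := S_inj hS _ _ (hxz.trans hxy.symm)
  rwa [← this]

end withHS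
end Attractor
section Quant

variable {K : Type*} [MetricSpace K] [CompactSpace K] [Nonempty K]
  {N : ℕ} {m : Fin N → ℕ} {S : ∀ i, Fin (m i) → K → K}

lemma shf_iterate (l : ℕ) (ω : ℕ → Fin N) (n : ℕ) : (shf^[l] ω) n = ω (n + l) := by
  induction l generalizing ω with
  | zero => rfl
  | succ l ih =>
      rw [Function.iterate_succ_apply, ih (shf ω)]
      rfl

variable (hS : ∀ i j, IsBiLipContraction (S i j)) (hm : ∀ i, 0 < m i)
include hS hm

lemma dist_levelSets {Cm : ℝ} (hCm0 : 0 ≤ Cm)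
    (hlip : ∀ i j (x y : K), dist (S i j x) (S i j y) ≤ Cm * dist x y) (k : ℕ)
    (ω : ℕ → Fin N) :
    ∀ x ∈ levelSets m S univ ω k, ∃ y ∈ attractorOf m S univ ω,
      dist x y ≤ Cm ^ k * diam (univ : Set K) := by
  induction k generalizing ω with
  | zero =>
      intro x _
      obtain ⟨y, hy⟩ := attractor_nonempty hS hm ω
      refine ⟨y, hy, ?_⟩
      simpa using dist_le_diam_of_mem (isCompact_univ.isBounded) (mem_univ x) (mem_univ y)
  | succ k ih =>
      intro x hx
      rw [levelSets_succ] at hx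
      obtain ⟨j, z, hz, rfl⟩ := mem_iUnion.mp hx
      obtain ⟨y', hy', hdy⟩ := ih (shf ω) z hz
      refine ⟨S (ω 0) j y', map_attractor_subset hS ω j (mem_image_of_mem _ hy'), ?_⟩
      calc dist (S (ω 0) j z) (S (ω 0) j y') ≤ Cm * dist z y' := hlip _ _ _ _
        _ ≤ Cm * (Cm ^ k * diam (univ : Set K)) := mul_le_mul_of_nonneg_left hdy hCm0
        _ = Cm ^ (k + 1) * diam (univ : Set K) := by ring

lemma coverNum_cyl {Cm : ℝ} (hCm0 : 0 ≤ Cm)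
    (hlip : ∀ i j (x y : K), dist (S i j x) (S i j y) ≤ Cm * dist x y)
    {ω ω' : ℕ → Fin N} {k : ℕ} {δ : ℝ} (hpre : ∀ i < k, ω' i = ω i) (hδ : 0 < δ)
    (hk : Cm ^ k * diam (univ : Set K) ≤ δ) :
    coverNum (attractorOf m S univ ω') (5 * δ) ≤ coverNum (attractorOf m S univ ω) δ := by
  classical
  by_cases hne : coverNum (attractorOf m S univ ω) δ = ⊤
  · exact hne ▸ le_top
  obtain ⟨t, h1, h2, hcard⟩ := exists_cover hne
  refine le_trans (coverNum_le_card (t := t.image fun U => thickening (2 * δ) U) ?_ ?_) ?_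
  · intro U hU
    obtain ⟨V, hVt, rfl⟩ := Finset.mem_image.mp hU
    refine ⟨isOpen_thickening, ?_⟩
    refine le_trans (diam_thickening_le _ (by linarith)) ?_
    have := (h1 V hVt).2
    linarith
  · intro x hx
    have hxk : x ∈ levelSets m S univ ω k := by
      rw [← levelSets_congr hpre]
      exact mem_iInter.mp hx k
    obtain ⟨y, hy, hdxy⟩ := dist_levelSets hS hm hCm0 hlip k ω x hxk
    obtain ⟨U, hUt, hyU⟩ := mem_iUnion₂.mp (h2 hy)
    refine mem_iUnion₂.mpr ⟨_, Finset.mem_image.mpr ⟨U, hUt, rfl⟩, ?_⟩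
    rw [mem_thickening_iff]
    exact ⟨y, hyU, by linarith⟩
  · rw [← hcard]
    exact_mod_cast Finset.card_image_le

lemma coverNum_prefix (l : ℕ) (ω : ℕ → Fin N) {δ : ℝ} (hδ : 0 < δ) :
    coverNum (attractorOf m S univ ω) (3 ^ l * δ) ≤
      (∏ i ∈ Finset.range l, (m (ω i) : ℝ≥0∞)) *
        coverNum (attractorOf m S univ (shf^[l] ω)) δ := by
  induction l generalizing ω with
  | zero => simp
  | succ l ih =>
      have hδ' : (0 : ℝ) < 3 ^ l * δ := by positivity
      calc coverNum (attractorOf m S univ ω) (3 ^ (l + 1) * δ)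
          ≤ coverNum (⋃ j, S (ω 0) j '' attractorOf m S univ (shf ω)) (3 ^ (l + 1) * δ) :=
            coverNum_mono (attractor_subset_union hS ω) _
        _ ≤ ∑ j, coverNum (S (ω 0) j '' attractorOf m S univ (shf ω)) (3 ^ (l + 1) * δ) :=
            coverNum_iUnion _ _
        _ ≤ ∑ _j : Fin (m (ω 0)), coverNum (attractorOf m S univ (shf ω)) (3 ^ l * δ) := by
            refine Finset.sum_le_sum fun j _ => ?_
            have h3 : (3 : ℝ) ^ (l + 1) * δ = 3 * (3 ^ l * δ) := by ring
            rw [h3]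
            exact coverNum_image (S_lip hS (ω 0) j) hδ'
        _ = (m (ω 0) : ℝ≥0∞) * coverNum (attractorOf m S univ (shf ω)) (3 ^ l * δ) := by
            simp [Finset.sum_const, mul_comm]
        _ ≤ (m (ω 0) : ℝ≥0∞) * ((∏ i ∈ Finset.range l, (m (shf ω i) : ℝ≥0∞)) *
              coverNum (attractorOf m S univ (shf^[l] (shf ω))) δ) :=
            mul_le_mul_of_nonneg_left (ih (shf ω)) (zero_le)
        _ = (∏ i ∈ Finset.range (l + 1), (m (ω i) : ℝ≥0∞)) *
              coverNum (attractorOf m S univ (shf^[l + 1] ω)) δ := by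
            rw [Finset.prod_range_succ', ← Function.iterate_succ_apply]
            have hp : (∏ i ∈ Finset.range l, (m (shf ω i) : ℝ≥0∞)) =
                ∏ i ∈ Finset.range l, (m (ω (i + 1)) : ℝ≥0∞) := rfl
            rw [hp]
            ring

end Quant
set_option maxHeartbeats 1000000 in
/-- The typical lower box dimension of the random attractor is infimal. -/
theorem typical_lowerBoxDim_eq_inf {K : Type*} [MetricSpace K] [CompactSpace K] [Nonempty K]
    {N : ℕ} (hN : 0 < N) (m : Fin N → ℕ) (hm : ∀ i, 0 < m i)
    (S : ∀ i, Fin (m i) → K → K) (hS : ∀ i j, IsBiLipContraction (S i j)) :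
    {ω : ℕ → Fin N |
        lowerBoxDim (attractorOf m S Set.univ ω) =
          ⨅ u : ℕ → Fin N, lowerBoxDim (attractorOf m S Set.univ u)} ∈
      residual (ℕ → Fin N) := by
  classical
  set I : ℝ≥0∞ := ⨅ u : ℕ → Fin N, lowerBoxDim (attractorOf m S Set.univ u) with hIdef
  have hIle : ∀ ω, I ≤ lowerBoxDim (attractorOf m S Set.univ ω) := fun ω => hIdef ▸ iInf_le _ ω
  by_cases hItop : I = ⊤
  · have : {ω : ℕ → Fin N | lowerBoxDim (attractorOf m S Set.univ ω) = I} = univ :=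
      eq_univ_of_forall fun ω => le_antisymm (le_top.trans_eq hItop.symm) (hIle ω)
    rw [this]
    exact univ_mem
  -- notation
  set g : (ℕ → Fin N) → ℝ → ℝ≥0∞ := fun ω δ =>
    ENNReal.ofReal (Real.log (coverNum (attractorOf m S Set.univ ω) δ).toReal / -Real.log δ)
    with hg
  have hglim : ∀ ω, lowerBoxDim (attractorOf m S Set.univ ω) =
      Filter.liminf (g ω) (nhdsWithin 0 (Set.Ioi 0)) := fun ω => rfl
  -- uniform contraction constant
  have hCfex : ∀ (i : Fin N) (j : Fin (m i)), ∃ C : ℝ, 0 ≤ C ∧ C < 1 ∧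
      ∀ x y, dist (S i j x) (S i j y) ≤ C * dist x y := by
    intro i j
    obtain ⟨c, C, hc, hC, hb⟩ := hS i j
    exact ⟨max C 0, le_max_right _ _, max_lt hC one_pos, fun x y =>
      (hb x y).2.trans (mul_le_mul_of_nonneg_right (le_max_left _ _) dist_nonneg)⟩
  choose Cf hCf0 hCf1 hCfd using hCfex
  have hnep : Nonempty ((i : Fin N) × Fin (m i)) := ⟨⟨⟨0, hN⟩, ⟨0, hm _⟩⟩⟩
  set Cm : ℝ := Finset.univ.sup' Finset.univ_nonempty
    (fun p : (i : Fin N) × Fin (m i) => Cf p.1 p.2) with hCm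
  have hCm0 : 0 ≤ Cm := by
    obtain ⟨p⟩ := hnep
    rw [hCm]
    exact (hCf0 p.1 p.2).trans
      (Finset.le_sup' (f := fun p : (i : Fin N) × Fin (m i) => Cf p.1 p.2) (Finset.mem_univ p))
  have hCm1 : Cm < 1 := (Finset.sup'_lt_iff _).mpr fun p _ => hCf1 p.1 p.2
  have hlip : ∀ (i : Fin N) (j : Fin (m i)) (x y : K),
      dist (S i j x) (S i j y) ≤ Cm * dist x y := fun i j x y =>
    (hCfd i j x y).trans (mul_le_mul_of_nonneg_right
      (Finset.le_sup' (f := fun p : (i : Fin N) × Fin (m i) => Cf p.1 p.2)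
        (Finset.mem_univ ⟨i, j⟩)) dist_nonneg)
  set Λ : ℝ := diam (univ : Set K) with hΛ
  have hΛ0 : 0 ≤ Λ := diam_nonneg
  -- the open dense sets
  set G : ℕ → Set (ℕ → Fin N) := fun n =>
    {ω | ∃ (k : ℕ) (δ : ℝ), 0 < δ ∧ δ < 1 / (n + 1) ∧ ∀ ω' : ℕ → Fin N,
      (∀ i < k, ω' i = ω i) → g ω' δ ≤ I + (((n : ℕ) + 1 : ℕ) : ℝ≥0∞)⁻¹} with hG
  -- openness
  have hGopen : ∀ n, IsOpen (G n) := by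
    intro n
    rw [isOpen_iff_mem_nhds]
    rintro ω ⟨k, δ, hδ0, hδ1, hb⟩
    have hcyl : IsOpen {ω' : ℕ → Fin N | ∀ i < k, ω' i = ω i} := by
      have hEq : {ω' : ℕ → Fin N | ∀ i < k, ω' i = ω i} =
          ⋂ i ∈ Finset.range k, {ω' : ℕ → Fin N | ω' i = ω i} := by
        ext ω'; simp [Finset.mem_range]
      rw [hEq]
      refine isOpen_biInter_finset fun i _ => ?_
      have hEq2 : {ω' : ℕ → Fin N | ω' i = ω i} =
          (fun ω' : ℕ → Fin N => ω' i) ⁻¹' {ω i} := by ext; simp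
      rw [hEq2]
      exact (continuous_apply i).isOpen_preimage _ (isOpen_discrete _)
    refine mem_nhds_iff.mpr ⟨_, ?_, hcyl, fun i _ => rfl⟩
    rintro ω' hω'
    exact ⟨k, δ, hδ0, hδ1, fun ω'' h'' => hb ω'' fun i hi => (h'' i hi).trans (hω' i hi)⟩
  -- density
  have hGdense : ∀ n, Dense (G n) := by
    intro n
    rw [dense_iff_inter_open]
    intro U hU hUne
    obtain ⟨ω₀, hω₀⟩ := hUne
    obtain ⟨J, u, hJu, hJsub⟩ := isOpen_pi_iff.mp hU ω₀ hω₀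
    set l : ℕ := J.sup id + 1 with hl
    have hJl : ∀ a ∈ J, a < l := fun a ha => Nat.lt_succ_of_le (Finset.le_sup (f := id) ha)
    -- pick a good tail
    have hmidne : (((2 * (n + 1) : ℕ)) : ℝ≥0∞)⁻¹ ≠ 0 :=
      ENNReal.inv_ne_zero.mpr (ENNReal.natCast_ne_top _)
    have hlt : I < I + (((2 * (n + 1) : ℕ)) : ℝ≥0∞)⁻¹ := ENNReal.lt_add_right hItop hmidne
    obtain ⟨v, hv⟩ := iInf_lt_iff.mp (lt_of_le_of_lt hIdef.ge hlt)
    set ω : ℕ → Fin N := fun i => if i < l then ω₀ i else v (i - l) with hω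
    have hωU : ω ∈ U := by
      refine hJsub fun a ha => ?_
      have : ω a = ω₀ a := if_pos (hJl a ha)
      rw [this]
      exact (hJu a ha).2
    refine ⟨ω, hωU, ?_⟩
    -- numeric setup
    set Wn : ℕ := ∏ i ∈ Finset.range l, m (ω i) with hWn
    have hWn1 : 1 ≤ Wn := Finset.prod_pos fun i _ => hm _
    have hWnR : (1 : ℝ) ≤ (Wn : ℝ) := by exact_mod_cast hWn1
    set A : ℝ := 5 * 3 ^ l with hA
    have h3l : (1 : ℝ) ≤ 3 ^ l := by
      calc (1 : ℝ) = 1 ^ l := (one_pow l).symm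
        _ ≤ 3 ^ l := pow_le_pow_left₀ (by norm_num) (by norm_num) l
    have hA1 : (1 : ℝ) ≤ A := by rw [hA]; linarith
    have hA0 : (0 : ℝ) < A := by linarith
    have hAlog : 0 ≤ Real.log A := Real.log_nonneg hA1
    have hmidtop : I + (((2 * (n + 1) : ℕ)) : ℝ≥0∞)⁻¹ ≠ ⊤ := by
      refine ENNReal.add_ne_top.mpr ⟨hItop, ?_⟩
      exact ENNReal.inv_ne_top.mpr (by exact_mod_cast (by positivity : 0 < 2 * (n + 1)).ne')
    have htartop : I + (((n : ℕ) + 1 : ℕ) : ℝ≥0∞)⁻¹ ≠ ⊤ := by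
      refine ENNReal.add_ne_top.mpr ⟨hItop, ?_⟩
      exact ENNReal.inv_ne_top.mpr (by exact_mod_cast (Nat.succ_ne_zero n))
    set Btar : ℝ := (I + (((n : ℕ) + 1 : ℕ) : ℝ≥0∞)⁻¹).toReal with hBtar
    set Bmid : ℝ := (I + (((2 * (n + 1) : ℕ)) : ℝ≥0∞)⁻¹).toReal with hBmid
    have hBtarEq : Btar = I.toReal + ((n : ℝ) + 1)⁻¹ := by
      rw [hBtar, ENNReal.toReal_add hItop (ENNReal.inv_ne_top.mpr
        (by exact_mod_cast (Nat.succ_ne_zero n)))]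
      congr 1
      rw [ENNReal.toReal_inv, ENNReal.toReal_natCast]
      push_cast
      ring
    have hBmidEq : Bmid = I.toReal + (2 * ((n : ℝ) + 1))⁻¹ := by
      rw [hBmid, ENNReal.toReal_add hItop (ENNReal.inv_ne_top.mpr
        (by exact_mod_cast (by positivity : 0 < 2 * (n + 1)).ne'))]
      congr 1
      rw [ENNReal.toReal_inv, ENNReal.toReal_natCast]
      push_cast
      ring
    have hn1 : (0 : ℝ) < (n : ℝ) + 1 := by positivity
    have hγ0 : 0 < Btar - Bmid := by
      rw [hBtarEq, hBmidEq]
      have : (2 * ((n : ℝ) + 1))⁻¹ < ((n : ℝ) + 1)⁻¹ := by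
        apply inv_strictAnti₀ hn1
        linarith
      linarith
    have hBtar0 : 0 ≤ Btar := ENNReal.toReal_nonneg
    set γ : ℝ := Btar - Bmid with hγ
    set δ₀ : ℝ := min (1 / (A * ((n : ℝ) + 1)))
      (Real.exp (-((Real.log Wn + Btar * Real.log A) / γ))) with hδ₀
    have hδ₀0 : 0 < δ₀ := lt_min (by positivity) (Real.exp_pos _)
    -- pick a frequent good scale for v
    have hvlim : Filter.liminf (g v) (nhdsWithin 0 (Set.Ioi 0)) <
        I + (((2 * (n + 1) : ℕ)) : ℝ≥0∞)⁻¹ := hv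
    have hvf : ∃ᶠ δ in nhdsWithin 0 (Set.Ioi 0),
        g v δ < I + (((2 * (n + 1) : ℕ)) : ℝ≥0∞)⁻¹ :=
      frequently_lt_of_liminf_lt (h := hvlim)
    obtain ⟨δ, hgv, hδmem⟩ :=
      (hvf.and_eventually (Ioo_mem_nhdsGT hδ₀0)).exists
    obtain ⟨hδ0, hδδ₀⟩ := hδmem
    have hδA : δ < 1 / (A * ((n : ℝ) + 1)) := hδδ₀.trans_le (min_le_left _ _)
    have hδexp : δ < Real.exp (-((Real.log Wn + Btar * Real.log A) / γ)) :=
      hδδ₀.trans_le (min_le_right _ _)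
    have hAδ1n : A * δ < 1 / ((n : ℝ) + 1) := by
      have h1 : A * δ < A * (1 / (A * ((n : ℝ) + 1))) := mul_lt_mul_of_pos_left hδA hA0
      have h2 : A * (1 / (A * ((n : ℝ) + 1))) = 1 / ((n : ℝ) + 1) := by
        field_simp
      linarith
    have hAδ1 : A * δ < 1 := by
      have h1 : (1 : ℝ) / ((n : ℝ) + 1) ≤ 1 := by
        rw [div_le_one hn1]; linarith
      linarith
    have hδ1 : δ < 1 := by
      have h1 : δ ≤ A * δ := le_mul_of_one_le_left hδ0.le hA1
      linarith
    set T : ℝ := -Real.log δ with hT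
    have hT0 : 0 < T := by
      have := Real.log_neg hδ0 hδ1
      rw [hT]; linarith
    have hTγ : Real.log Wn + Btar * Real.log A ≤ γ * T := by
      have hlogδ : Real.log δ < -((Real.log Wn + Btar * Real.log A) / γ) :=
        (Real.log_lt_iff_lt_exp hδ0).mpr hδexp
      have : (Real.log Wn + Btar * Real.log A) / γ < T := by rw [hT]; linarith
      calc Real.log Wn + Btar * Real.log A
          = ((Real.log Wn + Btar * Real.log A) / γ) * γ := by field_simp
        _ ≤ T * γ := mul_le_mul_of_nonneg_right this.le hγ0.le
        _ = γ * T := mul_comm _ _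
    -- choose the depth k
    have hδ3 : (0 : ℝ) < 3 ^ l * δ := by positivity
    obtain ⟨k, hkpow⟩ := ((tendsto_pow_atTop_nhds_zero_of_lt_one hCm0 hCm1).eventually
      (gt_mem_nhds (by positivity : (0:ℝ) < (3 ^ l * δ) / (Λ + 1)))).exists
    have hkΛ : Cm ^ k * Λ ≤ 3 ^ l * δ := by
      have h1 : Cm ^ k * Λ ≤ ((3 ^ l * δ) / (Λ + 1)) * Λ :=
        mul_le_mul_of_nonneg_right hkpow.le hΛ0
      have h2 : ((3 ^ l * δ) / (Λ + 1)) * Λ ≤ 3 ^ l * δ := by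
        rw [div_mul_eq_mul_div, div_le_iff₀ (by linarith)]
        nlinarith
      linarith
    -- assemble the witnesses
    refine ⟨k, A * δ, by positivity, ?_, ?_⟩
    · rw [hA]
      push_cast
      rw [show ((n : ℝ) + 1) = ((n : ℝ) + 1) from rfl] at hAδ1n
      convert hAδ1n using 2 <;> norm_num
    intro ω' hpre
    -- covering estimates
    have hcov1 : coverNum (attractorOf m S Set.univ ω') (5 * (3 ^ l * δ)) ≤
        coverNum (attractorOf m S Set.univ ω) (3 ^ l * δ) :=
      coverNum_cyl hS hm hCm0 hlip hpre hδ3 hkΛ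
    have hωv : shf^[l] ω = v := by
      funext i
      rw [shf_iterate]
      have h1 : ¬ (i + l < l) := by omega
      rw [hω]
      simp only [h1, if_false, Nat.add_sub_cancel]
    have hcov2 : coverNum (attractorOf m S Set.univ ω) (3 ^ l * δ) ≤
        (Wn : ℝ≥0∞) * coverNum (attractorOf m S Set.univ v) δ := by
      have h := coverNum_prefix hS hm l ω hδ0
      rw [hωv] at h
      rw [hWn, Nat.cast_prod]
      exact h
    have hAδrw : A * δ = 5 * (3 ^ l * δ) := by rw [hA]; ring
    have hNvfin : coverNum (attractorOf m S Set.univ v) δ ≠ ⊤ :=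
      (coverNum_lt_top (attractor_isCompact hS v) hδ0).ne
    set Nv : ℝ := (coverNum (attractorOf m S Set.univ v) δ).toReal with hNv
    have hNv1 : (1 : ℝ) ≤ Nv := by
      have h1 := ENNReal.toReal_mono hNvfin (one_le_coverNum (attractor_nonempty hS hm v) δ)
      simpa using h1
    have hfin2 : (Wn : ℝ≥0∞) * coverNum (attractorOf m S Set.univ v) δ ≠ ⊤ :=
      ENNReal.mul_ne_top (ENNReal.natCast_ne_top _) hNvfin
    have hchain : coverNum (attractorOf m S Set.univ ω') (A * δ) ≤
        (Wn : ℝ≥0∞) * coverNum (attractorOf m S Set.univ v) δ := by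
      rw [hAδrw]
      exact hcov1.trans hcov2
    have hN'fin : coverNum (attractorOf m S Set.univ ω') (A * δ) ≠ ⊤ :=
      ne_top_of_le_ne_top hfin2 hchain
    set N' : ℝ := (coverNum (attractorOf m S Set.univ ω') (A * δ)).toReal with hN'
    have hN'le : N' ≤ (Wn : ℝ) * Nv := by
      have h1 := ENNReal.toReal_mono hfin2 hchain
      rwa [ENNReal.toReal_mul, ENNReal.toReal_natCast] at h1
    have hN'1 : (1 : ℝ) ≤ N' := by
      have h1 := ENNReal.toReal_mono hN'fin
        (one_le_coverNum (attractor_nonempty hS hm ω') (A * δ))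
      simpa using h1
    -- bound for v from hgv
    have hlogNv : Real.log Nv ≤ Bmid * T := by
      have h1 : Real.log Nv / -Real.log δ ≤ Bmid := by
        rw [hBmid]
        exact (ENNReal.ofReal_le_iff_le_toReal hmidtop).mp hgv.le
      rw [← hT] at h1
      have := (div_le_iff₀ hT0).mp h1
      linarith
    -- final log computation
    have hlogAδ : Real.log (A * δ) = Real.log A + Real.log δ :=
      Real.log_mul hA0.ne' hδ0.ne'
    have hTA : 0 < T - Real.log A := by
      have h1 : Real.log (A * δ) < 0 := Real.log_neg (by positivity) hAδ1
      rw [hlogAδ] at h1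
      rw [hT]
      linarith
    have hlogN' : Real.log N' ≤ Real.log Wn + Real.log Nv := by
      have hWnNv : (0 : ℝ) < (Wn : ℝ) * Nv := by positivity
      have h1 : Real.log N' ≤ Real.log ((Wn : ℝ) * Nv) :=
        (Real.log_le_log_iff (by linarith) hWnNv).mpr hN'le
      rwa [Real.log_mul (by positivity) (by linarith)] at h1
    have hlogWn0 : 0 ≤ Real.log (Wn : ℝ) := Real.log_nonneg hWnR
    have hkey : Real.log N' / (T - Real.log A) ≤ Btar := by
      rw [div_le_iff₀ hTA]
      rw [hγ] at hTγ
      have hgoal : Btar * (T - Real.log A) = Btar * T - Btar * Real.log A := by ring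
      rw [hgoal]
      have h1 : (Btar - Bmid) * T = Btar * T - Bmid * T := by ring
      rw [h1] at hTγ
      linarith [hTγ, hlogNv, hlogN']
    -- conclude
    have hgrw : g ω' (A * δ) = ENNReal.ofReal (Real.log N' / (T - Real.log A)) := by
      rw [hg]
      simp only [← hN']
      congr 1
      rw [hlogAδ, hT]
      ring_nf
    rw [hgrw]
    calc ENNReal.ofReal (Real.log N' / (T - Real.log A)) ≤ ENNReal.ofReal Btar :=
        ENNReal.ofReal_le_ofReal hkey
      _ = I + (((n : ℕ) + 1 : ℕ) : ℝ≥0∞)⁻¹ := by rw [hBtar]; exact ENNReal.ofReal_toReal htartop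
  -- conclusion
  have hres : ∀ n, G n ∈ residual (ℕ → Fin N) := fun n =>
    residual_of_dense_open (hGopen n) (hGdense n)
  have hint : (⋂ n, G n) ∈ residual (ℕ → Fin N) := countable_iInter_mem.mpr hres
  refine mem_of_superset hint ?_
  intro ω hω
  have hfle : lowerBoxDim (attractorOf m S Set.univ ω) ≤ I := by
    have hfreq : ∀ n : ℕ, lowerBoxDim (attractorOf m S Set.univ ω) ≤
        I + (((n : ℕ) + 1 : ℕ) : ℝ≥0∞)⁻¹ := by
      intro n
      rw [hglim]
      refine liminf_le_of_frequently_le' ?_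
      rw [frequently_iff]
      intro U hU
      obtain ⟨η, hη, hsubU⟩ := mem_nhdsGT_iff_exists_Ioo_subset.mp hU
      obtain ⟨n', hn'⟩ := exists_nat_one_div_lt (show (0 : ℝ) < η from hη)
      obtain ⟨k, δ, hδ0, hδ1, hb⟩ := mem_iInter.mp hω (max n n')
      have hδη : δ < η := by
        have h1 : (1 : ℝ) / ((max n n' : ℕ) + 1) ≤ 1 / ((n' : ℕ) + 1) :=
          one_div_le_one_div_of_le (by positivity)
            (by exact_mod_cast Nat.succ_le_succ (le_max_right n n'))
        exact ((hδ1.trans_le h1).trans hn')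
      refine ⟨δ, hsubU ⟨hδ0, hδη⟩, ?_⟩
      refine (hb ω fun i _ => rfl).trans (add_le_add_right ?_ I)
      exact ENNReal.inv_le_inv.mpr (by exact_mod_cast Nat.succ_le_succ (le_max_left n n'))
    refine ENNReal.le_of_forall_pos_le_add fun ε hε _ => ?_
    obtain ⟨n, hn⟩ := ENNReal.exists_inv_nat_lt
      (show ((ε : ℝ≥0∞)) ≠ 0 from by exact_mod_cast hε.ne')
    refine (hfreq n).trans (add_le_add_right ?_ I)
    refine le_of_lt (lt_of_le_of_lt ?_ hn)
    exact ENNReal.inv_le_inv.mpr (by exact_mod_cast Nat.le_succ n)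
  exact le_antisymm hfle (hIle ω)
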